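/- For every even integer n ≥ 4, the sum-distinguishing chromatic index of the complete graph K_n equals n+1, and for every odd integer n ≥ 3 it equals n. -/

import Mathlib

/-- `φ : Sym2 V → ℕ` is a proper edge-`k`-coloring of `G`: every edge gets a color in
`{1,…,k}` and adjacent edges get distinct colors. -/
def IsPEC {V : Type*} (G : SimpleGraph V) (k : ℕ) (φ : Sym2 V → ℕ) : Prop :=
  (∀ e ∈ G.edgeSet, φ e ∈ Finset.Icc 1 k) ∧
  ∀ u v w : V, G.Adj u v → G.Adj u w → v ≠ w → φ s(u, v) ≠ φ s(u, w)

/-- The set of colors appearing on edges incident with `v`. -/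
def colorSet {V : Type*} [Fintype V] (G : SimpleGraph V) [DecidableRel G.Adj]
    (φ : Sym2 V → ℕ) (v : V) : Finset ℕ :=
  (G.neighborFinset v).image fun u => φ s(v, u)

/-- The sum of colors appearing on edges incident with `v`. -/
def colorSum {V : Type*} [Fintype V] (G : SimpleGraph V) [DecidableRel G.Adj]
    (φ : Sym2 V → ℕ) (v : V) : ℕ :=
  ∑ u ∈ G.neighborFinset v, φ s(v, u)

/-- A vertex-distinguishing proper edge-`k`-coloring. -/
def IsVDC {V : Type*} [Fintype V] (G : SimpleGraph V) [DecidableRel G.Adj]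
    (k : ℕ) (φ : Sym2 V → ℕ) : Prop :=
  IsPEC G k φ ∧ ∀ u v : V, u ≠ v → colorSet G φ u ≠ colorSet G φ v

/-- A sum-distinguishing proper edge-`k`-coloring. -/
def IsSDC {V : Type*} [Fintype V] (G : SimpleGraph V) [DecidableRel G.Adj]
    (k : ℕ) (φ : Sym2 V → ℕ) : Prop :=
  IsPEC G k φ ∧ ∀ u v : V, u ≠ v → colorSum G φ u ≠ colorSum G φ v

/-- The chromatic index: least `k` admitting a proper edge-`k`-coloring. -/
noncomputable def chromIndex {V : Type*} (G : SimpleGraph V) : ℕ :=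
  sInf {k | ∃ φ : Sym2 V → ℕ, IsPEC G k φ}

/-- The vertex-distinguishing chromatic index. -/
noncomputable def vdIndex {V : Type*} [Fintype V] (G : SimpleGraph V)
    [DecidableRel G.Adj] : ℕ :=
  sInf {k | ∃ φ : Sym2 V → ℕ, IsVDC G k φ}

/-- The sum-distinguishing chromatic index. -/
noncomputable def sdIndex {V : Type*} [Fintype V] (G : SimpleGraph V)
    [DecidableRel G.Adj] : ℕ :=
  sInf {k | ∃ φ : Sym2 V → ℕ, IsSDC G k φ}



open Finset

lemma nbr_top' {n : ℕ} (v : Fin n) :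
    (⊤ : SimpleGraph (Fin n)).neighborFinset v = Finset.univ.erase v := by
  ext u; simp [SimpleGraph.mem_neighborFinset, ne_comm, eq_comm]

namespace SD
variable {n : ℕ}

lemma nbr_top (v : Fin n) : (⊤ : SimpleGraph (Fin n)).neighborFinset v = Finset.univ.erase v := by
  ext u; simp [SimpleGraph.mem_neighborFinset, ne_comm, eq_comm]

section lower
variable {k : ℕ} {φ : Sym2 (Fin n) → ℕ}

lemma injOn_phi (h : IsPEC (⊤ : SimpleGraph (Fin n)) k φ) (v : Fin n) :
    Set.InjOn (fun u => φ s(v, u)) ((⊤ : SimpleGraph (Fin n)).neighborFinset v) := by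
  intro a ha b hb hab
  by_contra hne
  exact h.2 v a b (by simp [SimpleGraph.mem_neighborFinset] at ha ⊢; exact Ne.symm ha)
    (by simp [SimpleGraph.mem_neighborFinset] at hb ⊢; exact Ne.symm hb) hne hab

lemma card_colorSet (h : IsPEC (⊤ : SimpleGraph (Fin n)) k φ) (v : Fin n) :
    (colorSet ⊤ φ v).card = n - 1 := by
  rw [colorSet, Finset.card_image_of_injOn (injOn_phi h v), nbr_top,
    Finset.card_erase_of_mem (Finset.mem_univ v), Finset.card_univ, Fintype.card_fin]

lemma colorSum_eq (h : IsPEC (⊤ : SimpleGraph (Fin n)) k φ) (v : Fin n) :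
    colorSum ⊤ φ v = ∑ c ∈ colorSet ⊤ φ v, c := by
  rw [colorSet, Finset.sum_image (fun a ha b hb => injOn_phi h v ha hb)]
  rfl

lemma colorSet_subset (h : IsPEC (⊤ : SimpleGraph (Fin n)) k φ) (v : Fin n) :
    colorSet ⊤ φ v ⊆ Finset.Icc 1 k := by
  intro c hc
  rw [colorSet, Finset.mem_image] at hc
  obtain ⟨u, hu, rfl⟩ := hc
  refine h.1 _ ?_
  rw [SimpleGraph.mem_edgeSet, SimpleGraph.top_adj]
  rw [nbr_top, Finset.mem_erase] at hu
  exact hu.1.symm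

lemma lb_ge (hn : 3 ≤ n) (h : IsSDC (⊤ : SimpleGraph (Fin n)) k φ) : n ≤ k := by
  have v0 : Fin n := ⟨0, by omega⟩
  set a : Fin n := ⟨0, by omega⟩ with ha
  set b : Fin n := ⟨1, by omega⟩ with hb
  have h01 : a ≠ b := by
    intro hh; rw [Fin.mk.injEq] at hh; omega
  have hk1 : n - 1 ≤ k := by
    have := Finset.card_le_card (colorSet_subset h.1 a)
    rw [card_colorSet h.1, Nat.card_Icc] at this
    omega
  rcases Nat.lt_or_ge k n with hk | hk
  · exfalso
    have hkeq : k = n - 1 := by omega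
    subst hkeq
    have heq : ∀ v : Fin n, colorSet (⊤ : SimpleGraph (Fin n)) φ v = Finset.Icc 1 (n-1) := by
      intro v
      refine Finset.eq_of_subset_of_card_le (colorSet_subset h.1 v) ?_
      rw [card_colorSet h.1, Nat.card_Icc]
      omega
    exact h.2 a b h01 (by rw [colorSum_eq h.1, colorSum_eq h.1, heq a, heq b])
  · exact hk

end lower
end SD

namespace SD2
open SD

lemma even_card_invol {α : Type*} [DecidableEq α] :
    ∀ (S : Finset α) (f : α → α), (∀ v ∈ S, f v ∈ S ∧ f (f v) = v ∧ f v ≠ v) → Even S.card := by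
  intro S
  induction S using Finset.strongInduction with
  | _ S ih =>
    intro f hf
    rcases S.eq_empty_or_nonempty with rfl | ⟨v, hv⟩
    · simp
    · obtain ⟨hfv, hffv, hne⟩ := hf v hv
      have hmem : f v ∈ S.erase v := Finset.mem_erase.mpr ⟨hne, hfv⟩
      have hsub : (S.erase v).erase (f v) ⊂ S :=
        (Finset.erase_ssubset_insert _ _).trans_subset (by
          rw [Finset.insert_eq_self.mpr hmem]
          exact Finset.erase_subset _ _)
      have hrec := ih _ hsub f ?_
      · have hc1 : (S.erase v).card = S.card - 1 := Finset.card_erase_of_mem hv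
        have hc2 : ((S.erase v).erase (f v)).card = (S.erase v).card - 1 :=
          Finset.card_erase_of_mem hmem
        have hcpos : 1 ≤ S.card := Finset.card_pos.mpr ⟨v, hv⟩
        have hcpos2 : 1 ≤ (S.erase v).card := Finset.card_pos.mpr ⟨f v, hmem⟩
        rcases hrec with ⟨m, hm⟩
        exact ⟨m + 1, by omega⟩
      · intro w hw
        rw [Finset.mem_erase, Finset.mem_erase] at hw
        obtain ⟨hw1, hw2, hw3⟩ := hw
        obtain ⟨h1, h2, h3⟩ := hf w hw3
        refine ⟨?_, h2, h3⟩
        rw [Finset.mem_erase, Finset.mem_erase]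
        refine ⟨fun hc => hw2 ?_, fun hc => hw1 ?_, h1⟩
        · rw [← hffv, ← hc]; exact h2.symm
        · rw [← hc]; exact h2.symm

variable {n k : ℕ} {φ : Sym2 (Fin n) → ℕ}

lemma lb_even_aux (hn : 3 ≤ n) (hev : Even n)
    (h : IsSDC (⊤ : SimpleGraph (Fin n)) n φ) : False := by
  classical
  have hmiss : ∀ v : Fin n, (∑ c ∈ (Finset.Icc 1 n \ colorSet ⊤ φ v), c) + colorSum ⊤ φ v
      = ∑ c ∈ Finset.Icc 1 n, c := by
    intro v
    rw [colorSum_eq h.1 v]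
    exact Finset.sum_sdiff (colorSet_subset h.1 v)
  set miss : Fin n → ℕ := fun v => ∑ c ∈ (Finset.Icc 1 n \ colorSet ⊤ φ v), c with hmissdef
  have hcard1 : ∀ v : Fin n, (Finset.Icc 1 n \ colorSet ⊤ φ v).card = 1 := by
    intro v
    rw [Finset.card_sdiff_of_subset (colorSet_subset h.1 v), card_colorSet h.1, Nat.card_Icc]
    omega
  have hmem_miss : ∀ v : Fin n, miss v ∈ Finset.Icc 1 n \ colorSet ⊤ φ v := by
    intro v
    obtain ⟨b, hb⟩ := Finset.card_eq_one.mp (hcard1 v)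
    rw [hmissdef]
    simp only [hb, Finset.sum_singleton]
    exact Finset.mem_singleton_self b
  have hmiss_inj : Function.Injective miss := by
    intro u v huv
    by_contra hne
    refine h.2 u v hne ?_
    have h1 := hmiss u
    have h2 := hmiss v
    have huv' : (∑ c ∈ (Finset.Icc 1 n \ colorSet ⊤ φ u), c)
        = ∑ c ∈ (Finset.Icc 1 n \ colorSet ⊤ φ v), c := huv
    omega
  set a : Fin n := ⟨0, by omega⟩ with ha
  set c := miss a with hc
  have hSc : ∀ v : Fin n, v ≠ a → c ∈ colorSet ⊤ φ v := by
    intro v hv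
    by_contra hcs
    have hcIcc : c ∈ Finset.Icc 1 n := (Finset.mem_sdiff.mp (hmem_miss a)).1
    have hmveq : miss v = c := by
      obtain ⟨b, hb⟩ := Finset.card_eq_one.mp (hcard1 v)
      have hcmem : c ∈ Finset.Icc 1 n \ colorSet ⊤ φ v := Finset.mem_sdiff.mpr ⟨hcIcc, hcs⟩
      have hmv := hmem_miss v
      rw [hb, Finset.mem_singleton] at hcmem hmv
      rw [hmv, hcmem]
    exact hv (hmiss_inj hmveq)
  set S : Finset (Fin n) := Finset.univ.filter (fun v => c ∈ colorSet ⊤ φ v) with hS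
  have hScard : S.card = n - 1 := by
    have hSeq : S = Finset.univ.erase a := by
      ext v
      simp only [hS, Finset.mem_filter, Finset.mem_univ, true_and, Finset.mem_erase, and_true]
      constructor
      · intro hcv hva
        rw [hva] at hcv
        exact (Finset.mem_sdiff.mp (hmem_miss a)).2 hcv
      · intro hva
        exact hSc v hva
    rw [hSeq, Finset.card_erase_of_mem (Finset.mem_univ a), Finset.card_univ, Fintype.card_fin]
  set f : Fin n → Fin n := fun v =>
    if hex : ∃ u, u ≠ v ∧ φ s(v, u) = c then hex.choose else v with hf
  have hfspec : ∀ v ∈ S, f v ≠ v ∧ φ s(v, f v) = c := by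
    intro v hvS
    rw [hS, Finset.mem_filter] at hvS
    obtain ⟨u, hu, hphi⟩ := Finset.mem_image.mp hvS.2
    rw [nbr_top, Finset.mem_erase] at hu
    have hex : ∃ u, u ≠ v ∧ φ s(v, u) = c := ⟨u, hu.1, hphi⟩
    rw [hf]
    simp only [dif_pos hex]
    exact ⟨hex.choose_spec.1, hex.choose_spec.2⟩
  have hfS : ∀ v ∈ S, f v ∈ S ∧ f (f v) = v ∧ f v ≠ v := by
    intro v hvS
    obtain ⟨hne, hphi⟩ := hfspec v hvS
    have hfvS : f v ∈ S := by
      rw [hS, Finset.mem_filter]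
      refine ⟨Finset.mem_univ _, ?_⟩
      rw [colorSet, Finset.mem_image]
      refine ⟨v, ?_, ?_⟩
      · rw [nbr_top, Finset.mem_erase]
        exact ⟨fun hc' => hne hc'.symm, Finset.mem_univ v⟩
      · rw [Sym2.eq_swap]; exact hphi
    refine ⟨hfvS, ?_, hne⟩
    obtain ⟨hne2, hphi2⟩ := hfspec (f v) hfvS
    by_contra hffv
    refine h.1.2 (f v) (f (f v)) v ((SimpleGraph.top_adj _ _).mpr (fun hh => hne2 hh.symm))
      ((SimpleGraph.top_adj _ _).mpr hne) hffv ?_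
    rw [hphi2, show s(f v, v) = s(v, f v) from Sym2.eq_swap]
    exact hphi.symm
  have heven := even_card_invol S f hfS
  rw [hScard] at heven
  rcases hev with ⟨m, hm⟩
  rcases heven with ⟨m', hm'⟩
  omega

lemma lb_even (hn : 3 ≤ n) (hev : Even n)
    (h : IsSDC (⊤ : SimpleGraph (Fin n)) k φ) : n + 1 ≤ k := by
  have hge := lb_ge hn h
  rcases Nat.lt_or_ge n k with hk | hk
  · omega
  · have hkeq : k = n := by omega
    subst hkeq
    exact absurd h (fun hh => lb_even_aux hn hev hh)

end SD2

namespace SD3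
variable {n : ℕ}

def ι (n : ℕ) : Fin n → ZMod n := fun v => (v.val : ZMod n)

lemma ι_inj (hn : 0 < n) : Function.Injective (ι n) := by
  have : NeZero n := ⟨by omega⟩
  intro a b hab
  have := congrArg ZMod.val hab
  rw [show ι n a = (a.val : ZMod n) from rfl, show ι n b = (b.val : ZMod n) from rfl,
    ZMod.val_cast_of_lt a.isLt, ZMod.val_cast_of_lt b.isLt] at this
  exact Fin.ext this

lemma ι_bij (hn : 0 < n) : Function.Bijective (ι n) := by
  have : NeZero n := ⟨by omega⟩
  rw [Fintype.bijective_iff_injective_and_card]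
  exact ⟨ι_inj hn, by rw [Fintype.card_fin, ZMod.card]⟩

def phi0 (n : ℕ) : Sym2 (Fin n) → ℕ :=
  Sym2.lift ⟨fun i j => (ι n i + ι n j).val + 1,
    fun i j => by dsimp only; rw [add_comm (ι n i) (ι n j)]⟩

lemma phi0_apply (i j : Fin n) : phi0 n s(i, j) = (ι n i + ι n j).val + 1 := rfl

def T (n : ℕ) : ℕ := ∑ i ∈ Finset.range n, i

lemma sum_val_eq_T (hn : 0 < n) [NeZero n] : ∑ x : ZMod n, x.val = T n := by
  have h1 : ∑ u : Fin n, (ι n u).val = ∑ x : ZMod n, x.val :=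
    Function.Bijective.sum_comp (ι_bij hn) ZMod.val
  have h2 : ∑ u : Fin n, (ι n u).val = ∑ u : Fin n, u.val :=
    Finset.sum_congr rfl (fun u _ => ZMod.val_cast_of_lt u.isLt)
  rw [← h1, h2, T]
  exact Fin.sum_univ_eq_sum_range (fun i => i) n

lemma base_sum [NeZero n] (v : Fin n) :
    (∑ u ∈ Finset.univ.erase v, phi0 n s(v, u)) + ((ι n v + ι n v).val + 1) = n + T n := by
  have hn : 0 < n := Nat.pos_of_ne_zero (NeZero.ne n)
  have h0 := Finset.sum_erase_add Finset.univ (fun u => phi0 n s(v, u)) (Finset.mem_univ v)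
  have h0' : (∑ u ∈ Finset.univ.erase v, phi0 n s(v, u)) + ((ι n v + ι n v).val + 1)
      = ∑ u : Fin n, phi0 n s(v, u) := h0
  rw [h0']
  have h1 : ∑ u : Fin n, phi0 n s(v, u) = ∑ u : Fin n, ((ι n v + ι n u).val + 1) := rfl
  rw [h1, Finset.sum_add_distrib, Finset.sum_const, Finset.card_univ, Fintype.card_fin,
    smul_eq_mul, mul_one, add_comm]
  congr 1
  have h2 : ∑ u : Fin n, (ι n v + ι n u).val = ∑ x : ZMod n, (ι n v + x).val :=
    Function.Bijective.sum_comp (ι_bij hn) (fun x => (ι n v + x).val)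
  rw [h2]
  have h3 : ∑ x : ZMod n, (ι n v + x).val = ∑ x : ZMod n, x.val :=
    Fintype.sum_equiv (Equiv.addLeft (ι n v)) _ _ (fun x => rfl)
  rw [h3, sum_val_eq_T hn]

lemma val2 [NeZero n] (v : Fin n) : (ι n v + ι n v).val = (2 * v.val) % n := by
  rw [ι, ← Nat.cast_add, ZMod.val_natCast]
  congr 1
  omega

end SD3

namespace SD3
variable {n : ℕ}

lemma two_inv (hodd : n % 2 = 1) : (((n+1)/2 : ℕ) : ZMod n) * 2 = 1 := by
  have h1 : (((n+1)/2 : ℕ) : ZMod n) * 2 = (((n+1)/2 * 2 : ℕ) : ZMod n) := by push_cast; ring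
  rw [h1, show (n+1)/2*2 = n + 1 by omega]
  push_cast [ZMod.natCast_self]
  ring

lemma double_inj (hodd : n % 2 = 1) {a b : ZMod n} (h : a + a = b + b) : a = b := by
  have : NeZero n := ⟨by omega⟩
  rw [← two_mul, ← two_mul] at h
  calc a = ((((n+1)/2 : ℕ) : ZMod n) * 2) * a := by rw [two_inv hodd, one_mul]
    _ = (((n+1)/2 : ℕ) : ZMod n) * (2 * a) := by ring
    _ = (((n+1)/2 : ℕ) : ZMod n) * (2 * b) := by rw [h]
    _ = ((((n+1)/2 : ℕ) : ZMod n) * 2) * b := by ring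
    _ = b := by rw [two_inv hodd, one_mul]

lemma phi0_PEC (hn : 0 < n) : IsPEC (⊤ : SimpleGraph (Fin n)) n (phi0 n) := by
  have : NeZero n := ⟨by omega⟩
  constructor
  · intro e _
    induction e using Sym2.inductionOn with
    | hf x y =>
      rw [phi0_apply, Finset.mem_Icc]
      have := (ι n x + ι n y).val_lt
      omega
  · intro u v w _ _ hne heq
    rw [phi0_apply, phi0_apply] at heq
    have h1 : ι n u + ι n v = ι n u + ι n w := by
      have := ZMod.val_injective n (show (ι n u + ι n v).val = (ι n u + ι n w).val by omega)
      exact this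
    exact hne (ι_inj hn (add_left_cancel h1))

lemma colorSum_phi0 [NeZero n] (v : Fin n) :
    colorSum (⊤ : SimpleGraph (Fin n)) (phi0 n) v + ((2 * v.val) % n + 1) = n + T n := by
  rw [colorSum, nbr_top', ← val2]
  exact base_sum v

lemma odd_SDC (hn : 3 ≤ n) (hodd : n % 2 = 1) :
    IsSDC (⊤ : SimpleGraph (Fin n)) n (phi0 n) := by
  have : NeZero n := ⟨by omega⟩
  refine ⟨phi0_PEC (by omega), ?_⟩
  intro u v hne heq
  have h1 := colorSum_phi0 (n := n) u
  have h2 := colorSum_phi0 (n := n) v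
  have h3 : (2 * u.val) % n = (2 * v.val) % n := by omega
  have h4 : (ι n u + ι n u).val = (ι n v + ι n v).val := by rw [val2, val2, h3]
  exact hne (ι_inj (by omega) (double_inj hodd (ZMod.val_injective n h4)))

end SD3

namespace SD4
open SD3
variable {n : ℕ}

/-- partner value function for the even construction -/
def mval (n x : ℕ) : ℕ :=
  if x = 0 then 1
  else if x = 1 then 0
  else if n % 4 = 0 ∧ x = 3*(n/4) then 3*(n/4)+1
  else if n % 4 = 0 ∧ x = 3*(n/4)+1 then 3*(n/4)
  else if n/4 < x ∧ x < n - n/4 ∧ x ≠ n/2 then n - x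
  else x

lemma mval_lt (hn : 6 ≤ n) {x : ℕ} (hx : x < n) : mval n x < n := by
  unfold mval; split_ifs <;> omega

lemma mval_cases (x : ℕ) :
    (x = 0 ∧ mval n x = 1) ∨ (x = 1 ∧ mval n x = 0)
    ∨ (n % 4 = 0 ∧ x = 3*(n/4) ∧ mval n x = 3*(n/4)+1)
    ∨ (n % 4 = 0 ∧ x = 3*(n/4)+1 ∧ mval n x = 3*(n/4))
    ∨ (x ≠ 0 ∧ x ≠ 1 ∧ ¬(n % 4 = 0 ∧ x = 3*(n/4)) ∧ ¬(n % 4 = 0 ∧ x = 3*(n/4)+1)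
        ∧ (n/4 < x ∧ x < n - n/4 ∧ x ≠ n/2) ∧ mval n x = n - x)
    ∨ (x ≠ 0 ∧ x ≠ 1 ∧ ¬(n % 4 = 0 ∧ x = 3*(n/4)) ∧ ¬(n % 4 = 0 ∧ x = 3*(n/4)+1)
        ∧ ¬(n/4 < x ∧ x < n - n/4 ∧ x ≠ n/2) ∧ mval n x = x) := by
  by_cases h1 : x = 0
  · exact Or.inl ⟨h1, by simp only [mval, if_pos h1]⟩
  by_cases h2 : x = 1
  · exact Or.inr (Or.inl ⟨h2, by simp only [mval, if_neg h1, if_pos h2]⟩)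
  by_cases h3 : n % 4 = 0 ∧ x = 3*(n/4)
  · exact Or.inr (Or.inr (Or.inl ⟨h3.1, h3.2,
      by simp only [mval, if_neg h1, if_neg h2, if_pos h3]⟩))
  by_cases h4 : n % 4 = 0 ∧ x = 3*(n/4)+1
  · exact Or.inr (Or.inr (Or.inr (Or.inl ⟨h4.1, h4.2,
      by simp only [mval, if_neg h1, if_neg h2, if_neg h3, if_pos h4]⟩)))
  by_cases h5 : n/4 < x ∧ x < n - n/4 ∧ x ≠ n/2
  · exact Or.inr (Or.inr (Or.inr (Or.inr (Or.inl ⟨h1, h2, h3, h4, h5,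
      by simp only [mval, if_neg h1, if_neg h2, if_neg h3, if_neg h4, if_pos h5]⟩))))
  · exact Or.inr (Or.inr (Or.inr (Or.inr (Or.inr ⟨h1, h2, h3, h4, h5,
      by simp only [mval, if_neg h1, if_neg h2, if_neg h3, if_neg h4, if_neg h5]⟩))))

lemma mval_invol (hn : 6 ≤ n) (hev : n % 2 = 0) {x : ℕ} (hx : x < n) :
    mval n (mval n x) = x := by
  have c1 := mval_cases (n := n) x
  have c2 := mval_cases (n := n) (mval n x)
  rcases c1 with ⟨h1,h2⟩|⟨h1,h2⟩|⟨h0,h1,h2⟩|⟨h0,h1,h2⟩|⟨ha,hb,hc,hd,he,h2⟩|⟨ha,hb,hc,hd,he,h2⟩ <;>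
    rcases c2 with ⟨g1,g2⟩|⟨g1,g2⟩|⟨g0,g1,g2⟩|⟨g0,g1,g2⟩|⟨ga,gb,gc,gd,ge,g2⟩|⟨ga,gb,gc,gd,ge,g2⟩ <;>
    omega

def muE (n : ℕ) : Fin n → Fin n := fun v => ⟨mval n v.val % n, Nat.mod_lt _ v.pos⟩

lemma muE_val (hn : 6 ≤ n) (v : Fin n) : (muE n v).val = mval n v.val :=
  Nat.mod_eq_of_lt (mval_lt hn v.isLt)

lemma muE_invol (hn : 6 ≤ n) (hev : n % 2 = 0) (v : Fin n) : muE n (muE n v) = v := by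
  apply Fin.ext
  rw [muE_val hn, muE_val hn, mval_invol hn hev v.isLt]

def ME (n : ℕ) : Finset (Sym2 (Fin n)) :=
  (Finset.univ.filter fun v => muE n v ≠ v).image fun v => s(v, muE n v)

lemma mem_ME (hn : 6 ≤ n) (hev : n % 2 = 0) (v u : Fin n) :
    s(v, u) ∈ ME n ↔ (u = muE n v ∧ muE n v ≠ v) := by
  constructor
  · intro hm
    rw [ME, Finset.mem_image] at hm
    obtain ⟨w, hw, hs⟩ := hm
    rw [Finset.mem_filter] at hw
    rw [Sym2.eq_iff] at hs
    rcases hs with ⟨rfl, rfl⟩ | ⟨rfl, hwv⟩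
    · exact ⟨rfl, hw.2⟩
    · have h1 : muE n v = w := by rw [← hwv, muE_invol hn hev]
      refine ⟨h1.symm, ?_⟩
      rw [h1]
      intro hc
      exact hw.2 (hwv.trans hc.symm)
  · intro ⟨h1, h2⟩
    rw [ME, Finset.mem_image]
    refine ⟨v, ?_, by rw [h1]⟩
    rw [Finset.mem_filter]
    exact ⟨Finset.mem_univ v, h2⟩

def phiE (n : ℕ) : Sym2 (Fin n) → ℕ := fun e => if e ∈ ME n then n + 1 else phi0 n e

lemma phiE_edge (hn : 6 ≤ n) (hev : n % 2 = 0) (v u : Fin n) :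
    phiE n s(v, u) = if (u = muE n v ∧ muE n v ≠ v) then n + 1 else phi0 n s(v, u) := by
  rw [phiE]
  congr 1
  rw [eq_iff_iff]
  exact mem_ME hn hev v u

lemma phiE_PEC (hn : 6 ≤ n) (hev : n % 2 = 0) :
    IsPEC (⊤ : SimpleGraph (Fin n)) (n+1) (phiE n) := by
  have hpec := phi0_PEC (n := n) (by omega)
  constructor
  · intro e he
    rw [phiE]
    split_ifs with hm
    · rw [Finset.mem_Icc]; omega
    · have := hpec.1 e he
      rw [Finset.mem_Icc] at *
      omega
  · intro u v w hadj1 hadj2 hne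
    have hv : v ≠ u := fun hc => (SimpleGraph.top_adj u v).mp hadj1 hc.symm
    have hw : w ≠ u := fun hc => (SimpleGraph.top_adj u w).mp hadj2 hc.symm
    rw [phiE_edge hn hev, phiE_edge hn hev]
    split_ifs with h1 h2 h2
    · intro _; exact hne (h1.1.trans h2.1.symm)
    · have := hpec.1 s(u, w) (by rw [SimpleGraph.mem_edgeSet]; exact hadj2)
      rw [Finset.mem_Icc] at this
      omega
    · have := hpec.1 s(u, v) (by rw [SimpleGraph.mem_edgeSet]; exact hadj1)
      rw [Finset.mem_Icc] at this
      omega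
    · exact hpec.2 u v w hadj1 hadj2 hne

lemma colorSum_phiE_fixed (hn : 6 ≤ n) (hev : n % 2 = 0) (v : Fin n) (hfix : muE n v = v) :
    colorSum (⊤ : SimpleGraph (Fin n)) (phiE n) v
      = colorSum (⊤ : SimpleGraph (Fin n)) (phi0 n) v := by
  rw [colorSum, colorSum, nbr_top']
  refine Finset.sum_congr rfl ?_
  intro u hu
  rw [Finset.mem_erase] at hu
  rw [phiE_edge hn hev]
  rw [if_neg]
  intro ⟨_, hc⟩
  exact hc hfix

lemma colorSum_phiE_moved (hn : 6 ≤ n) (hev : n % 2 = 0) (v : Fin n) (hmv : muE n v ≠ v) :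
    colorSum (⊤ : SimpleGraph (Fin n)) (phiE n) v + phi0 n s(v, muE n v)
      = colorSum (⊤ : SimpleGraph (Fin n)) (phi0 n) v + (n + 1) := by
  rw [colorSum, colorSum, nbr_top']
  have hmem : muE n v ∈ Finset.univ.erase v := Finset.mem_erase.mpr ⟨hmv, Finset.mem_univ _⟩
  have e1 : ∑ u ∈ (Finset.univ.erase v).erase (muE n v), phiE n s(v, u) + phiE n s(v, muE n v)
      = ∑ u ∈ Finset.univ.erase v, phiE n s(v, u) :=
    Finset.sum_erase_add (Finset.univ.erase v) (fun u => phiE n s(v, u)) hmem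
  have e2 : ∑ u ∈ (Finset.univ.erase v).erase (muE n v), phi0 n s(v, u) + phi0 n s(v, muE n v)
      = ∑ u ∈ Finset.univ.erase v, phi0 n s(v, u) :=
    Finset.sum_erase_add (Finset.univ.erase v) (fun u => phi0 n s(v, u)) hmem
  have e3 : ∑ u ∈ (Finset.univ.erase v).erase (muE n v), phiE n s(v, u)
      = ∑ u ∈ (Finset.univ.erase v).erase (muE n v), phi0 n s(v, u) := by
    refine Finset.sum_congr rfl ?_
    intro u hu
    rw [Finset.mem_erase] at hu
    rw [phiE_edge hn hev, if_neg]
    intro ⟨hc, _⟩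
    exact hu.1 hc
  have e4 : phiE n s(v, muE n v) = n + 1 := by
    rw [phiE_edge hn hev, if_pos ⟨rfl, hmv⟩]
  omega

end SD4

namespace SD5
open SD3 SD4
variable {n : ℕ}

def Aval (n x : ℕ) : ℕ :=
  if x = 0 then 3
  else if x = 1 then 5
  else if n % 4 = 0 ∧ x = 3*(n/4) then 4*(n/4)+3
  else if n % 4 = 0 ∧ x = 3*(n/4)+1 then 4*(n/4)+5
  else if n/4 < x ∧ x < n - n/4 ∧ x ≠ n/2 then (2*x) % n + 2
  else (2*x) % n + n + 2

lemma phi0_val [NeZero n] (v u : Fin n) : phi0 n s(v, u) = (v.val + u.val) % n + 1 := by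
  rw [phi0_apply, show ι n v = ((v.val : ℕ) : ZMod n) from rfl,
    show ι n u = ((u.val : ℕ) : ZMod n) from rfl, ← Nat.cast_add, ZMod.val_natCast]

lemma hmod2 {a : ℕ} (h1 : n ≤ a) (h2 : a < 2*n) : a % n = a - n := by
  rw [Nat.mod_eq_sub_mod h1, Nat.mod_eq_of_lt (by omega)]

lemma muE_ne_iff (hn : 6 ≤ n) (v : Fin n) : muE n v ≠ v ↔ mval n v.val ≠ v.val := by
  rw [not_iff_not]
  constructor
  · intro h; rw [← muE_val hn, h]
  · intro h; exact Fin.ext (by rw [muE_val hn, h])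

lemma colorSum_phiE (hn : 6 ≤ n) (hev : n % 2 = 0) (v : Fin n) :
    colorSum (⊤ : SimpleGraph (Fin n)) (phiE n) v + Aval n v.val = 2*n + T n + 1 := by
  have hnz : NeZero n := ⟨by omega⟩
  have hbase := colorSum_phi0 (n := n) v
  have hvlt := v.isLt
  have hrec : mval n v.val ≠ v.val →
      colorSum (⊤ : SimpleGraph (Fin n)) (phiE n) v + ((v.val + mval n v.val) % n + 1)
        = colorSum (⊤ : SimpleGraph (Fin n)) (phi0 n) v + (n + 1) := by
    intro hne
    have hmv : muE n v ≠ v := (muE_ne_iff hn v).mpr hne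
    have := colorSum_phiE_moved hn hev v hmv
    rwa [phi0_val, muE_val hn] at this
  rcases mval_cases (n := n) v.val with ⟨h1,h2⟩|⟨h1,h2⟩|⟨h0,h1,h2⟩|⟨h0,h1,h2⟩|⟨ha,hb,hc,hd,he,h2⟩|⟨ha,hb,hc,hd,he,h2⟩
  · -- v.val = 0
    have hr := hrec (by omega)
    rw [h2] at hr
    have e1 : (v.val + 1) % n = 1 := by rw [h1, Nat.mod_eq_of_lt (by omega)]
    have e2 : (2 * v.val) % n = 0 := by rw [h1, Nat.mul_zero, Nat.zero_mod]
    rw [Aval, if_pos h1]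
    omega
  · -- v.val = 1
    have hr := hrec (by omega)
    rw [h2] at hr
    have e1 : (v.val + 0) % n = 1 := by rw [h1, Nat.mod_eq_of_lt (by omega)]
    have e2 : (2 * v.val) % n = 2 := by rw [h1, Nat.mod_eq_of_lt (by omega)]
    rw [Aval, if_neg (by omega), if_pos h1]
    omega
  · -- v.val = 3h
    have hr := hrec (by omega)
    rw [h2] at hr
    have hq : 4 * (n/4) = n := by omega
    have e1 : (v.val + (3*(n/4)+1)) % n = 2*(n/4)+1 := by
      rw [h1, hmod2 (by omega) (by omega)]; omega
    have e2 : (2 * v.val) % n = 2*(n/4) := by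
      rw [h1, hmod2 (by omega) (by omega)]; omega
    rw [Aval, if_neg (by omega), if_neg (by omega), if_pos ⟨h0, h1⟩]
    omega
  · -- v.val = 3h+1
    have hr := hrec (by omega)
    rw [h2] at hr
    have hq : 4 * (n/4) = n := by omega
    have e1 : (v.val + 3*(n/4)) % n = 2*(n/4)+1 := by
      rw [h1, hmod2 (by omega) (by omega)]; omega
    have e2 : (2 * v.val) % n = 2*(n/4)+2 := by
      rw [h1, hmod2 (by omega) (by omega)]; omega
    rw [Aval, if_neg (by omega), if_neg (by omega), if_neg (by omega), if_pos ⟨h0, h1⟩]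
    omega
  · -- interval case
    have hr := hrec (by omega)
    rw [h2] at hr
    have e1 : (v.val + (n - v.val)) % n = 0 := by
      rw [show v.val + (n - v.val) = n by omega, Nat.mod_self]
    rw [Aval, if_neg (by omega), if_neg (by omega), if_neg hc, if_neg hd, if_pos he]
    omega
  · -- fixed case
    have hfix : muE n v = v := by
      by_contra hcon
      exact ((muE_ne_iff hn v).mp hcon) h2
    have := colorSum_phiE_fixed hn hev v hfix
    rw [Aval, if_neg ha, if_neg hb, if_neg hc, if_neg hd, if_neg he]
    have hx2 : 2*v.val % n = 2*v.val ∨ (2*v.val % n + n = 2*v.val) := by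
      rcases Nat.lt_or_ge (2*v.val) n with h | h
      · exact Or.inl (Nat.mod_eq_of_lt h)
      · right; rw [hmod2 h (by omega)]; omega
    omega

lemma Aval_cases (x : ℕ) :
    (x = 0 ∧ Aval n x = 3) ∨ (x = 1 ∧ Aval n x = 5)
    ∨ (n % 4 = 0 ∧ x = 3*(n/4) ∧ Aval n x = 4*(n/4)+3)
    ∨ (n % 4 = 0 ∧ x = 3*(n/4)+1 ∧ Aval n x = 4*(n/4)+5)
    ∨ (x ≠ 0 ∧ x ≠ 1 ∧ ¬(n % 4 = 0 ∧ x = 3*(n/4)) ∧ ¬(n % 4 = 0 ∧ x = 3*(n/4)+1)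
        ∧ (n/4 < x ∧ x < n - n/4 ∧ x ≠ n/2) ∧ Aval n x = (2*x) % n + 2)
    ∨ (x ≠ 0 ∧ x ≠ 1 ∧ ¬(n % 4 = 0 ∧ x = 3*(n/4)) ∧ ¬(n % 4 = 0 ∧ x = 3*(n/4)+1)
        ∧ ¬(n/4 < x ∧ x < n - n/4 ∧ x ≠ n/2) ∧ Aval n x = (2*x) % n + n + 2) := by
  by_cases h1 : x = 0
  · exact Or.inl ⟨h1, by simp only [Aval, if_pos h1]⟩
  by_cases h2 : x = 1
  · exact Or.inr (Or.inl ⟨h2, by simp only [Aval, if_neg h1, if_pos h2]⟩)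
  by_cases h3 : n % 4 = 0 ∧ x = 3*(n/4)
  · exact Or.inr (Or.inr (Or.inl ⟨h3.1, h3.2,
      by simp only [Aval, if_neg h1, if_neg h2, if_pos h3]⟩))
  by_cases h4 : n % 4 = 0 ∧ x = 3*(n/4)+1
  · exact Or.inr (Or.inr (Or.inr (Or.inl ⟨h4.1, h4.2,
      by simp only [Aval, if_neg h1, if_neg h2, if_neg h3, if_pos h4]⟩)))
  by_cases h5 : n/4 < x ∧ x < n - n/4 ∧ x ≠ n/2
  · exact Or.inr (Or.inr (Or.inr (Or.inr (Or.inl ⟨h1, h2, h3, h4, h5,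
      by simp only [Aval, if_neg h1, if_neg h2, if_neg h3, if_neg h4, if_pos h5]⟩))))
  · exact Or.inr (Or.inr (Or.inr (Or.inr (Or.inr ⟨h1, h2, h3, h4, h5,
      by simp only [Aval, if_neg h1, if_neg h2, if_neg h3, if_neg h4, if_neg h5]⟩))))

set_option maxHeartbeats 2000000 in
lemma Aval_inj (hn : 6 ≤ n) (hev : n % 2 = 0) {x y : ℕ} (hx : x < n) (hy : y < n)
    (hne : x ≠ y) : Aval n x ≠ Aval n y := by
  have hx2 : (2*x % n = 2*x ∧ 2*x < n) ∨ (2*x % n + n = 2*x ∧ 2*x % n < n) := by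
    rcases Nat.lt_or_ge (2*x) n with h | h
    · exact Or.inl ⟨Nat.mod_eq_of_lt h, h⟩
    · right
      constructor
      · rw [hmod2 h (by omega)]; omega
      · exact Nat.mod_lt _ (by omega)
  have hy2 : (2*y % n = 2*y ∧ 2*y < n) ∨ (2*y % n + n = 2*y ∧ 2*y % n < n) := by
    rcases Nat.lt_or_ge (2*y) n with h | h
    · exact Or.inl ⟨Nat.mod_eq_of_lt h, h⟩
    · right
      constructor
      · rw [hmod2 h (by omega)]; omega
      · exact Nat.mod_lt _ (by omega)
  have ca := Aval_cases (n := n) x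
  have cb := Aval_cases (n := n) y
  intro heq
  rcases ca with ⟨h1,h2⟩|⟨h1,h2⟩|⟨h0,h1,h2⟩|⟨h0,h1,h2⟩|⟨ha,hb,hc,hd,he,h2⟩|⟨ha,hb,hc,hd,he,h2⟩ <;>
    rcases cb with ⟨g1,g2⟩|⟨g1,g2⟩|⟨g0,g1,g2⟩|⟨g0,g1,g2⟩|⟨ga,gb,gc,gd,ge,g2⟩|⟨ga,gb,gc,gd,ge,g2⟩ <;>
    omega

lemma even_SDC (hn : 6 ≤ n) (hev : n % 2 = 0) :
    IsSDC (⊤ : SimpleGraph (Fin n)) (n+1) (phiE n) := by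
  refine ⟨phiE_PEC hn hev, ?_⟩
  intro u v hne heq
  have h1 := colorSum_phiE hn hev u
  have h2 := colorSum_phiE hn hev v
  have hvne : u.val ≠ v.val := fun hc => hne (Fin.ext hc)
  exact Aval_inj hn hev u.isLt v.isLt hvne (by omega)

end SD5


namespace SD6

def tbl : Fin 4 → Fin 4 → ℕ
  | 0, 1 => 1 | 1, 0 => 1
  | 2, 3 => 5 | 3, 2 => 5
  | 0, 2 => 2 | 2, 0 => 2
  | 1, 3 => 4 | 3, 1 => 4
  | 0, 3 => 3 | 3, 0 => 3
  | 1, 2 => 3 | 2, 1 => 3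
  | _, _ => 0

def phi4 : Sym2 (Fin 4) → ℕ := Sym2.lift ⟨tbl, by decide⟩

lemma phi4_SDC : IsSDC (⊤ : SimpleGraph (Fin 4)) 5 phi4 := by
  constructor
  · constructor
    · intro e he
      induction e using Sym2.inductionOn with
      | hf x y => revert he; rw [SimpleGraph.mem_edgeSet]; revert x y; decide
    · intro u v w h1 h2 h3; revert h1 h2 h3; revert u v w; decide
  · intro u v h; revert h; revert u v; decide

end SD6

/-- The sum-distinguishing chromatic index of `K_n` is `n+1` for even `n ≥ 4`
and `n` for odd `n ≥ 3`. -/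
theorem stmt3 (n : ℕ) :
    (4 ≤ n → Even n → sdIndex (⊤ : SimpleGraph (Fin n)) = n + 1) ∧
    (3 ≤ n → Odd n → sdIndex (⊤ : SimpleGraph (Fin n)) = n) := by
  constructor
  · intro h4 hev
    have hev2 : n % 2 = 0 := Nat.even_iff.mp hev
    have hmem : (n+1) ∈ {k | ∃ φ : Sym2 (Fin n) → ℕ, IsSDC (⊤ : SimpleGraph (Fin n)) k φ} := by
      rcases Nat.lt_or_ge n 6 with h6 | h6
      · have hn4 : n = 4 := by omega
        subst hn4
        exact ⟨SD6.phi4, SD6.phi4_SDC⟩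
      · exact ⟨SD4.phiE n, SD5.even_SDC h6 hev2⟩
    have hne : {k | ∃ φ : Sym2 (Fin n) → ℕ, IsSDC (⊤ : SimpleGraph (Fin n)) k φ}.Nonempty :=
      ⟨n+1, hmem⟩
    have h1 : sdIndex (⊤ : SimpleGraph (Fin n)) ≤ n + 1 := Nat.sInf_le hmem
    obtain ⟨φ, hφ⟩ := Nat.sInf_mem hne
    have h3 : n + 1 ≤ sdIndex (⊤ : SimpleGraph (Fin n)) := SD2.lb_even (by omega) hev hφ
    omega
  · intro h3n hodd
    have hodd2 : n % 2 = 1 := Nat.odd_iff.mp hodd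
    have hmem : n ∈ {k | ∃ φ : Sym2 (Fin n) → ℕ, IsSDC (⊤ : SimpleGraph (Fin n)) k φ} :=
      ⟨SD3.phi0 n, SD3.odd_SDC h3n hodd2⟩
    have hne : {k | ∃ φ : Sym2 (Fin n) → ℕ, IsSDC (⊤ : SimpleGraph (Fin n)) k φ}.Nonempty :=
      ⟨n, hmem⟩
    have h1 : sdIndex (⊤ : SimpleGraph (Fin n)) ≤ n := Nat.sInf_le hmem
    obtain ⟨φ, hφ⟩ := Nat.sInf_mem hne
    have h2 : n ≤ sdIndex (⊤ : SimpleGraph (Fin n)) := SD.lb_ge h3n hφ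
    omega
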